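/- Assume ε·λ_max(L_s + D_ω) < 2, and define Ē(U) := (1/2)·trace(Uᵀ L_s U) + (1/2)·Σ_{i=1}^n ω_i‖û_i − u_i‖². Then the penalized problem over Σ and the binary problem over Σ̄ have the same global minimizers: {U ∈ Σ : E(U) ≤ E(V) for all V ∈ Σ} = {U ∈ Σ̄ : Ē(U) ≤ Ē(V) for all V ∈ Σ̄}. -/

import Mathlib

open Matrix

noncomputable section

/-- The unit simplex `Δ` in `ℝ^K`. -/
def unitSimplex (K : ℕ) : Set (Fin K → ℝ) :=
  {y | (∀ j, 0 ≤ y j) ∧ ∑ j, y j = 1}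

/-- `Σ`: matrices in `ℝ^{n×K}` each of whose rows lies in the unit simplex. -/
def SigmaSet (n K : ℕ) : Set (Matrix (Fin n) (Fin K) ℝ) :=
  {U | ∀ i, U i ∈ unitSimplex K}

/-- `Σ̄`: binary matrices in `Σ`. -/
def SigmaBar (n K : ℕ) : Set (Matrix (Fin n) (Fin K) ℝ) :=
  {U | U ∈ SigmaSet n K ∧ ∀ i j, U i j = 0 ∨ U i j = 1}

/-- Frobenius inner product `⟨A,B⟩ = trace(AᵀB)`. -/
def frobInner {n K : ℕ} (A B : Matrix (Fin n) (Fin K) ℝ) : ℝ :=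
  Matrix.trace (Aᵀ * B)

/-- Frobenius norm. -/
def frobNorm {n K : ℕ} (A : Matrix (Fin n) (Fin K) ℝ) : ℝ :=
  Real.sqrt (∑ i, ∑ j, (A i j) ^ 2)

/-- The energy
`E(U) = (1/2)·trace(Uᵀ Lₛ U) + (1/ε)·Σᵢ uᵢᵀ(𝟙 − uᵢ) + (1/2)·Σᵢ ωᵢ‖ûᵢ − uᵢ‖²`. -/
def En {n K : ℕ} (Ls : Matrix (Fin n) (Fin n) ℝ) (ω : Fin n → ℝ)
    (Uhat : Matrix (Fin n) (Fin K) ℝ) (ε : ℝ) (U : Matrix (Fin n) (Fin K) ℝ) : ℝ :=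
  (1 / 2) * Matrix.trace (Uᵀ * Ls * U)
    + (1 / ε) * ∑ i, ∑ j, U i j * (1 - U i j)
    + (1 / 2) * ∑ i, ω i * ∑ j, (Uhat i j - U i j) ^ 2

/-- The gradient `∇E(U) = Lₛ U + (1/ε)(J − 2U) − D_ω(Û − U)` (`J` the all-ones matrix). -/
def gradE {n K : ℕ} (Ls : Matrix (Fin n) (Fin n) ℝ) (ω : Fin n → ℝ)
    (Uhat : Matrix (Fin n) (Fin K) ℝ) (ε : ℝ) (U : Matrix (Fin n) (Fin K) ℝ) :
    Matrix (Fin n) (Fin K) ℝ :=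
  Ls * U + (1 / ε) • (Matrix.of (fun _ _ => (1 : ℝ)) - 2 • U)
    - Matrix.diagonal ω * (Uhat - U)


/-- The unpenalized energy `Ē(U) = (1/2)·trace(Uᵀ Lₛ U) + (1/2)·Σᵢ ωᵢ‖ûᵢ − uᵢ‖²`. -/
def Ebar {n K : ℕ} (Ls : Matrix (Fin n) (Fin n) ℝ) (ω : Fin n → ℝ)
    (Uhat : Matrix (Fin n) (Fin K) ℝ) (U : Matrix (Fin n) (Fin K) ℝ) : ℝ :=
  (1 / 2) * Matrix.trace (Uᵀ * Ls * U)
    + (1 / 2) * ∑ i, ω i * ∑ j, (Uhat i j - U i j) ^ 2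

lemma rayleigh {m : ℕ} (A : Matrix (Fin m) (Fin m) ℝ) (hA : A.IsHermitian) (lam : ℝ)
    (hl : ∀ i, hA.eigenvalues i ≤ lam) (v : Fin m → ℝ) :
    v ⬝ᵥ (A *ᵥ v) ≤ lam * (v ⬝ᵥ v) := by
  set V : Matrix (Fin m) (Fin m) ℝ := (hA.eigenvectorUnitary : Matrix (Fin m) (Fin m) ℝ) with hV
  have hVmem : V ∈ Matrix.unitaryGroup (Fin m) ℝ := hA.eigenvectorUnitary.2
  have hstar : star V = Vᵀ := by
    ext i j; simp [Matrix.star_eq_conjTranspose, Matrix.conjTranspose_apply]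
  set u : Fin m → ℝ := Vᵀ *ᵥ v with hu
  have huv : u ⬝ᵥ u = v ⬝ᵥ v := by
    have h1 : V * Vᵀ = 1 := by
      have := (Matrix.mem_unitaryGroup_iff).mp hVmem
      rwa [hstar] at this
    calc u ⬝ᵥ u = vecMul v V ⬝ᵥ u := by rw [hu, Matrix.mulVec_transpose]
    _ = v ⬝ᵥ (V *ᵥ u) := (Matrix.dotProduct_mulVec v V u).symm
    _ = v ⬝ᵥ ((V * Vᵀ) *ᵥ v) := by rw [hu, Matrix.mulVec_mulVec]
    _ = v ⬝ᵥ v := by rw [h1, Matrix.one_mulVec]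
  have hAeq : A = V * Matrix.diagonal hA.eigenvalues * Vᵀ := by
    have := hA.spectral_theorem
    rw [Unitary.conjStarAlgAut_apply, ← hV] at this
    rw [hstar] at this
    simpa using this
  have key : v ⬝ᵥ (A *ᵥ v) = ∑ i, hA.eigenvalues i * (u i)^2 := by
    conv_lhs => rw [hAeq]
    rw [← Matrix.mulVec_mulVec, ← Matrix.mulVec_mulVec]
    rw [Matrix.dotProduct_mulVec, ← Matrix.mulVec_transpose]
    simp [← hu, dotProduct, Matrix.mulVec_diagonal]
    ring_nf
    apply Finset.sum_congr rfl
    intro i _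
    ring
  rw [key, ← huv]
  have : lam * (u ⬝ᵥ u) = ∑ i, lam * (u i)^2 := by
    simp [dotProduct, Finset.mul_sum]; ring_nf
  rw [this]
  apply Finset.sum_le_sum
  intro i _
  exact mul_le_mul_of_nonneg_right (hl i) (sq_nonneg _)

def LinE {n K : ℕ} (Ls : Matrix (Fin n) (Fin n) ℝ) (ω : Fin n → ℝ)
    (Uhat : Matrix (Fin n) (Fin K) ℝ) (ε : ℝ) (U W : Matrix (Fin n) (Fin K) ℝ) : ℝ :=
  (1/2) * (Matrix.trace (Wᵀ * Ls * U) + Matrix.trace (Uᵀ * Ls * W))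
  + (1/ε) * ∑ i, ∑ j, (W i j - 2 * U i j * W i j)
  + ∑ i, ω i * ∑ j, (U i j - Uhat i j) * W i j

def Qf {n K : ℕ} (Ls : Matrix (Fin n) (Fin n) ℝ) (ω : Fin n → ℝ) (ε : ℝ)
    (W : Matrix (Fin n) (Fin K) ℝ) : ℝ :=
  (1/2) * Matrix.trace (Wᵀ * Ls * W) + (1/2) * ∑ i, ω i * ∑ j, (W i j)^2
    - (1/ε) * ∑ i, ∑ j, (W i j)^2

lemma master {n K : ℕ} (Ls : Matrix (Fin n) (Fin n) ℝ) (ω : Fin n → ℝ)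
    (Uhat : Matrix (Fin n) (Fin K) ℝ) (ε : ℝ) (U W : Matrix (Fin n) (Fin K) ℝ) (s : ℝ) :
    En Ls ω Uhat ε (U + s • W)
      = En Ls ω Uhat ε U + s * LinE Ls ω Uhat ε U W + s^2 * Qf Ls ω ε W := by
  have L1 : Matrix.trace ((U + s • W)ᵀ * Ls * (U + s • W))
      = Matrix.trace (Uᵀ * Ls * U)
        + s * (Matrix.trace (Wᵀ * Ls * U) + Matrix.trace (Uᵀ * Ls * W))
        + s^2 * Matrix.trace (Wᵀ * Ls * W) := by
    simp [Matrix.transpose_add, Matrix.transpose_smul, Matrix.add_mul, Matrix.mul_add,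
      Matrix.smul_mul, Matrix.mul_smul, Matrix.trace_add, Matrix.trace_smul, smul_eq_mul]
    ring
  have L2 : ∑ i, ∑ j, (U + s • W) i j * (1 - (U + s • W) i j)
      = ∑ i, ∑ j, U i j * (1 - U i j)
        + s * ∑ i, ∑ j, (W i j - 2 * U i j * W i j)
        - s^2 * ∑ i, ∑ j, (W i j)^2 := by
    have h : ∀ (i : Fin n) (j : Fin K), (U + s • W) i j * (1 - (U + s • W) i j)
        = U i j * (1 - U i j) + s * (W i j - 2 * U i j * W i j) - s^2 * (W i j)^2 := by
      intro i j
      simp only [Matrix.add_apply, Matrix.smul_apply, smul_eq_mul]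
      ring
    simp_rw [h]
    simp_rw [Finset.sum_sub_distrib, Finset.sum_add_distrib, ← Finset.mul_sum]
    simp_rw [Finset.sum_sub_distrib]
  have L3 : ∑ i, ω i * ∑ j, (Uhat i j - (U + s • W) i j)^2
      = ∑ i, ω i * ∑ j, (Uhat i j - U i j)^2
        + 2 * s * ∑ i, ω i * ∑ j, (U i j - Uhat i j) * W i j
        + s^2 * ∑ i, ω i * ∑ j, (W i j)^2 := by
    have h : ∀ i : Fin n, ω i * ∑ j, (Uhat i j - (U + s • W) i j)^2
        = ω i * ∑ j, (Uhat i j - U i j)^2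
          + 2 * s * (ω i * ∑ j, (U i j - Uhat i j) * W i j)
          + s^2 * (ω i * ∑ j, (W i j)^2) := by
      intro i
      have h2 : ∀ j : Fin K, (Uhat i j - (U + s • W) i j)^2
          = (Uhat i j - U i j)^2 + 2 * s * ((U i j - Uhat i j) * W i j)
            + s^2 * (W i j)^2 := by
        intro j
        simp only [Matrix.add_apply, Matrix.smul_apply, smul_eq_mul]
        ring
      simp_rw [h2, Finset.sum_add_distrib, ← Finset.mul_sum]
      ring
    calc ∑ i, ω i * ∑ j, (Uhat i j - (U + s • W) i j)^2
        = ∑ i, (ω i * ∑ j, (Uhat i j - U i j)^2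
          + 2 * s * (ω i * ∑ j, (U i j - Uhat i j) * W i j)
          + s^2 * (ω i * ∑ j, (W i j)^2)) := Finset.sum_congr rfl (fun i _ => h i)
      _ = _ := by
        simp_rw [Finset.sum_add_distrib, ← Finset.mul_sum]
  unfold En LinE Qf
  rw [L1, L2, L3]
  ring

lemma trace_col {n K : ℕ} (Ls : Matrix (Fin n) (Fin n) ℝ) (W : Matrix (Fin n) (Fin K) ℝ) :
    Matrix.trace (Wᵀ * Ls * W) = ∑ j, (fun i => W i j) ⬝ᵥ (Ls *ᵥ (fun i => W i j)) := by
  have : ∀ j, Matrix.diag (Wᵀ * Ls * W) j = ∑ i', (∑ i, W i j * Ls i i') * W i' j := by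
    intro j
    simp [Matrix.diag, Matrix.mul_apply, Matrix.transpose_apply]
  calc Matrix.trace (Wᵀ * Ls * W) = ∑ j, ∑ i', (∑ i, W i j * Ls i i') * W i' j := by
        simp only [Matrix.trace]
        exact Finset.sum_congr rfl fun j _ => this j
    _ = ∑ j, ∑ i, ∑ i', W i j * Ls i i' * W i' j := by
        apply Finset.sum_congr rfl; intro j _
        rw [Finset.sum_comm]
        apply Finset.sum_congr rfl; intro i _
        rw [Finset.sum_mul]
    _ = _ := by
        apply Finset.sum_congr rfl; intro j _
        simp [dotProduct, Matrix.mulVec, Finset.mul_sum]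
        apply Finset.sum_congr rfl; intro i _
        apply Finset.sum_congr rfl; intro i' _
        ring

lemma Qf_le {n K : ℕ} (Ls : Matrix (Fin n) (Fin n) ℝ) (ω : Fin n → ℝ) (ε : ℝ)
    (hH : (Ls + Matrix.diagonal ω).IsHermitian) (lam : ℝ)
    (hl : ∀ i, hH.eigenvalues i ≤ lam)
    (W : Matrix (Fin n) (Fin K) ℝ) :
    Qf Ls ω ε W ≤ (lam/2 - 1/ε) * ∑ i, ∑ j, (W i j)^2 := by
  have keyD : ∑ i, ω i * ∑ j, (W i j)^2
      = ∑ j, (fun i => W i j) ⬝ᵥ ((Matrix.diagonal ω) *ᵥ (fun i => W i j)) := by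
    simp only [dotProduct, Matrix.mulVec_diagonal]
    rw [Finset.sum_comm]
    apply Finset.sum_congr rfl; intro i _
    rw [Finset.mul_sum]
    apply Finset.sum_congr rfl; intro j _
    ring
  have key : Matrix.trace (Wᵀ * Ls * W) + ∑ i, ω i * ∑ j, (W i j)^2
      = ∑ j, (fun i => W i j) ⬝ᵥ ((Ls + Matrix.diagonal ω) *ᵥ (fun i => W i j)) := by
    rw [trace_col, keyD, ← Finset.sum_add_distrib]
    apply Finset.sum_congr rfl; intro j _
    rw [Matrix.add_mulVec, dotProduct_add]
  have hcol : ∀ j, (fun i => W i j) ⬝ᵥ ((Ls + Matrix.diagonal ω) *ᵥ (fun i => W i j))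
      ≤ lam * ∑ i, (W i j)^2 := by
    intro j
    have := rayleigh (Ls + Matrix.diagonal ω) hH lam hl (fun i => W i j)
    have hd : (fun i => W i j) ⬝ᵥ (fun i => W i j) = ∑ i, (W i j)^2 := by
      simp [dotProduct, sq]
    rwa [hd] at this
  have hsum : Matrix.trace (Wᵀ * Ls * W) + ∑ i, ω i * ∑ j, (W i j)^2
      ≤ lam * ∑ i, ∑ j, (W i j)^2 := by
    rw [key]
    calc ∑ j, (fun i => W i j) ⬝ᵥ ((Ls + Matrix.diagonal ω) *ᵥ (fun i => W i j))
        ≤ ∑ j, lam * ∑ i, (W i j)^2 := Finset.sum_le_sum (fun j _ => hcol j)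
      _ = lam * ∑ i, ∑ j, (W i j)^2 := by
          rw [← Finset.mul_sum, Finset.sum_comm]
  unfold Qf
  linarith [hsum]


section Main
open Matrix
variable {n K : ℕ}

lemma entry_le_one (U : Matrix (Fin n) (Fin K) ℝ) (hU : U ∈ SigmaSet n K) (i : Fin n) (j : Fin K) :
    U i j ≤ 1 := by
  obtain ⟨hpos, hsum⟩ := hU i
  calc U i j ≤ ∑ b, U i b := Finset.single_le_sum (fun b _ => hpos b) (Finset.mem_univ j)
    _ = 1 := hsum

lemma pair_le_one (U : Matrix (Fin n) (Fin K) ℝ) (hU : U ∈ SigmaSet n K) (i : Fin n)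
    {j j' : Fin K} (hjj : j' ≠ j) : U i j + U i j' ≤ 1 := by
  obtain ⟨hpos, hsum⟩ := hU i
  have : ∑ b ∈ ({j, j'} : Finset (Fin K)), U i b ≤ ∑ b, U i b :=
    Finset.sum_le_sum_of_subset_of_nonneg (Finset.subset_univ _) (fun b _ _ => hpos b)
  rwa [Finset.sum_pair (Ne.symm hjj), hsum] at this

lemma exists_partner (U : Matrix (Fin n) (Fin K) ℝ) (hU : U ∈ SigmaSet n K) (i : Fin n)
    (j : Fin K) (hj1 : U i j < 1) : ∃ j', j' ≠ j ∧ 0 < U i j' := by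
  obtain ⟨hpos, hsum⟩ := hU i
  by_contra hcon
  push_neg at hcon
  have hz : ∀ j', j' ≠ j → U i j' = 0 := fun j' hj' => le_antisymm (hcon j' hj') (hpos j')
  have : ∑ b, U i b = U i j := Finset.sum_eq_single j (fun b _ hb => hz b hb) (by simp)
  rw [this] at hsum
  exact absurd hsum (ne_of_lt hj1)

/-- perturbation direction -/
def Wm (i : Fin n) (j j' : Fin K) : Matrix (Fin n) (Fin K) ℝ :=
  Matrix.of fun a b =>
    if a = i then ((if b = j then (1:ℝ) else 0) - (if b = j' then 1 else 0)) else 0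

lemma Wm_sq (i : Fin n) {j j' : Fin K} (hjj : j' ≠ j) :
    0 < ∑ a, ∑ b, (Wm i j j' a b)^2 := by
  apply Finset.sum_pos' (fun a _ => Finset.sum_nonneg fun b _ => sq_nonneg _)
  refine ⟨i, Finset.mem_univ i, Finset.sum_pos' (fun b _ => sq_nonneg _)
    ⟨j, Finset.mem_univ j, ?_⟩⟩
  simp [Wm, Ne.symm hjj]

lemma pert_mem (U : Matrix (Fin n) (Fin K) ℝ) (hU : U ∈ SigmaSet n K) (i : Fin n)
    {j j' : Fin K} (hjj : j' ≠ j) (s : ℝ) (h1 : 0 ≤ U i j + s) (h2 : 0 ≤ U i j' - s) :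
    U + s • Wm i j j' ∈ SigmaSet n K := by
  intro a
  obtain ⟨hpos, hsum⟩ := hU a
  constructor
  · intro b
    by_cases ha : a = i
    · subst ha
      by_cases hbj : b = j
      · subst hbj
        simpa [Wm, Ne.symm hjj] using h1
      · by_cases hbj' : b = j'
        · subst hbj'
          simpa [Wm, hbj] using h2
        · simpa [Wm, hbj, hbj'] using hpos b
    · simpa [Wm, ha] using hpos b
  · have hWrow : ∀ a', ∑ b, Wm i j j' a' b = 0 := by
      intro a'
      by_cases ha : a' = i
      · subst ha
        simp [Wm, Finset.sum_sub_distrib]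
      · simp [Wm, ha]
    calc ∑ b, (U + s • Wm i j j') a b = ∑ b, (U a b + s * Wm i j j' a b) := by
          apply Finset.sum_congr rfl; intro b _; simp
      _ = (∑ b, U a b) + s * ∑ b, Wm i j j' a b := by
          rw [Finset.sum_add_distrib, Finset.mul_sum]
      _ = 1 := by rw [hsum, hWrow, mul_zero, add_zero]

lemma En_eq_Ebar (Ls : Matrix (Fin n) (Fin n) ℝ) (ω : Fin n → ℝ)
    (Uhat : Matrix (Fin n) (Fin K) ℝ) (ε : ℝ) (U : Matrix (Fin n) (Fin K) ℝ)
    (hU : U ∈ SigmaBar n K) : En Ls ω Uhat ε U = Ebar Ls ω Uhat U := by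
  have h0 : ∑ i, ∑ j, U i j * (1 - U i j) = 0 :=
    Finset.sum_eq_zero fun i _ => Finset.sum_eq_zero fun j _ => by
      rcases hU.2 i j with h | h <;> rw [h] <;> ring
  unfold En Ebar
  rw [h0]
  ring

theorem global_minimizers_eq (n K : ℕ) (hn : 1 ≤ n) (hK : 2 ≤ K)
    (Ls : Matrix (Fin n) (Fin n) ℝ) (hLs : Ls.PosSemidef)
    (ω : Fin n → ℝ) (hω : ∀ i, 0 ≤ ω i)
    (Uhat : Matrix (Fin n) (Fin K) ℝ) (hUhat : Uhat ∈ SigmaSet n K)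
    (ε : ℝ) (hε : 0 < ε)
    (hH : (Ls + Matrix.diagonal ω).IsHermitian)
    (lam : ℝ) (hlam : IsGreatest (Set.range hH.eigenvalues) lam)
    (hsmall : ε * lam < 2) :
    {U ∈ SigmaSet n K | ∀ V ∈ SigmaSet n K, En Ls ω Uhat ε U ≤ En Ls ω Uhat ε V}
      = {U ∈ SigmaBar n K | ∀ V ∈ SigmaBar n K, Ebar Ls ω Uhat U ≤ Ebar Ls ω Uhat V} := by
  have hl : ∀ i, hH.eigenvalues i ≤ lam := fun i => hlam.2 ⟨i, rfl⟩
  have hcoef : lam / 2 - 1 / ε < 0 := by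
    have h1 : lam < 2 / ε := by rw [lt_div_iff₀ hε]; linarith [hsmall, mul_comm ε lam]
    have h3 : 0 < 1 / ε := by positivity
    have h2 : (2 : ℝ) / ε = 2 * (1 / ε) := by ring
    linarith
  have hQle := fun (W : Matrix (Fin n) (Fin K) ℝ) => Qf_le Ls ω ε hH lam hl W
  have hQ0 : ∀ W : Matrix (Fin n) (Fin K) ℝ, Qf Ls ω ε W ≤ 0 := by
    intro W
    refine le_trans (hQle W) (mul_nonpos_of_nonpos_of_nonneg (le_of_lt hcoef) ?_)
    positivity
  have hQneg : ∀ (i : Fin n) {j j' : Fin K}, j' ≠ j → Qf Ls ω ε (Wm i j j') < 0 := by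
    intro i j j' hjj
    refine lt_of_le_of_lt (hQle _) (mul_neg_of_neg_of_pos hcoef ?_)
    exact Wm_sq i hjj
  -- the fractional-entry Finset
  set F : Matrix (Fin n) (Fin K) ℝ → Finset (Fin n × Fin K) := fun X =>
    Finset.univ.filter (fun p => X p.1 p.2 ≠ 0 ∧ X p.1 p.2 ≠ 1) with hF
  have hFmem : ∀ X (a : Fin n) (b : Fin K), (a, b) ∈ F X ↔ X a b ≠ 0 ∧ X a b ≠ 1 := by
    intro X a b; simp [hF]
  -- rounding
  have round : ∀ N : ℕ, ∀ V ∈ SigmaSet n K, (F V).card ≤ N →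
      ∃ B ∈ SigmaBar n K, En Ls ω Uhat ε B ≤ En Ls ω Uhat ε V := by
    intro N
    induction N with
    | zero =>
      intro V hV hcard
      refine ⟨V, ⟨hV, ?_⟩, le_refl _⟩
      intro i j
      by_contra hc
      push_neg at hc
      have hmem : (i, j) ∈ F V := (hFmem V i j).mpr hc
      have := Finset.card_pos.mpr ⟨_, hmem⟩
      omega
    | succ N ih =>
      intro V hV hcard
      by_cases hle : (F V).card ≤ N
      · exact ih V hV hle
      have hpos : 0 < (F V).card := by omega
      obtain ⟨p, hp⟩ := Finset.card_pos.mp hpos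
      obtain ⟨i, j⟩ := p
      rw [hFmem] at hp
      have hj0 : 0 < V i j := lt_of_le_of_ne ((hV i).1 j) (Ne.symm hp.1)
      have hj1 : V i j < 1 := lt_of_le_of_ne (entry_le_one V hV i j) hp.2
      obtain ⟨j', hj'ne, hj'pos⟩ := exists_partner V hV i j hj1
      have hj'1 : V i j' < 1 := by
        have := pair_le_one V hV i hj'ne
        linarith
      set l := LinE Ls ω Uhat ε V (Wm i j j') with hLdef
      -- card decrease helper
      have cardlt : ∀ s : ℝ, ∀ pz : Fin K, (pz = j ∨ pz = j') →
          (V + s • Wm i j j') i pz = 0 → (F (V + s • Wm i j j')).card < (F V).card := by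
        intro s pz hpz hzero
        set V' := V + s • Wm i j j' with hV'
        have hsame : ∀ a b, ¬(a = i ∧ (b = j ∨ b = j')) → V' a b = V a b := by
          intro a b hab
          by_cases ha : a = i
          · subst ha
            push_neg at hab
            obtain ⟨hbj, hbj'⟩ := hab rfl
            simp [hV', Wm, hbj, hbj']
          · simp [hV', Wm, ha]
        have hsub : F V' ⊆ F V := by
          intro q hq
          obtain ⟨a, b⟩ := q
          rw [hFmem] at hq ⊢
          by_cases hab : a = i ∧ (b = j ∨ b = j')
          · obtain ⟨ha, hb⟩ := hab
            subst ha
            rcases hb with hb | hb <;> subst hb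
            · exact ⟨ne_of_gt hj0, ne_of_lt hj1⟩
            · exact ⟨ne_of_gt hj'pos, ne_of_lt hj'1⟩
          · rw [hsame a b hab] at hq
            exact hq
        apply Finset.card_lt_card
        refine ⟨hsub, fun hsup => ?_⟩
        have hmemV : (i, pz) ∈ F V := by
          rw [hFmem]
          rcases hpz with h | h <;> subst h
          · exact ⟨ne_of_gt hj0, ne_of_lt hj1⟩
          · exact ⟨ne_of_gt hj'pos, ne_of_lt hj'1⟩
        have := (hFmem V' i pz).mp (hsup hmemV)
        exact this.1 hzero
      rcases le_or_gt l 0 with hl0 | hl0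
      · -- move by s = V i j' > 0, zeroing entry (i, j')
        set s := V i j' with hs
        have hmem : V + s • Wm i j j' ∈ SigmaSet n K :=
          pert_mem V hV i hj'ne s (by linarith [(hV i).1 j]) (by simp [hs])
        have hzero : (V + s • Wm i j j') i j' = 0 := by
          simp [Wm, hj'ne, hs]
        have hclt := cardlt s j' (Or.inr rfl) hzero
        obtain ⟨B, hB, hBE⟩ := ih (V + s • Wm i j j') hmem (by omega)
        refine ⟨B, hB, le_trans hBE ?_⟩
        rw [master]
        have h1 : s * l ≤ 0 := mul_nonpos_of_nonneg_of_nonpos (le_of_lt hj'pos) hl0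
        have h2 : s ^ 2 * Qf Ls ω ε (Wm i j j') ≤ 0 :=
          mul_nonpos_of_nonneg_of_nonpos (sq_nonneg _) (hQ0 _)
        linarith
      · -- move by s = -(V i j) < 0, zeroing entry (i, j)
        set s := -(V i j) with hs
        have hmem : V + s • Wm i j j' ∈ SigmaSet n K :=
          pert_mem V hV i hj'ne s (by simp [hs]) (by simp [hs]; linarith)
        have hzero : (V + s • Wm i j j') i j = 0 := by
          simp [Wm, Ne.symm hj'ne, hs]
        have hclt := cardlt s j (Or.inl rfl) hzero
        obtain ⟨B, hB, hBE⟩ := ih (V + s • Wm i j j') hmem (by omega)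
        refine ⟨B, hB, le_trans hBE ?_⟩
        rw [master]
        have h1 : s * l ≤ 0 := by
          apply mul_nonpos_of_nonpos_of_nonneg _ (le_of_lt hl0)
          simp [hs]
          linarith
        have h2 : s ^ 2 * Qf Ls ω ε (Wm i j j') ≤ 0 :=
          mul_nonpos_of_nonneg_of_nonpos (sq_nonneg _) (hQ0 _)
        linarith
  ext U
  simp only [Set.mem_setOf_eq, Set.mem_sep_iff]
  constructor
  · rintro ⟨hU, hmin⟩
    have hUbar : U ∈ SigmaBar n K := by
      refine ⟨hU, ?_⟩
      intro i j
      by_contra hc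
      push_neg at hc
      have hj0 : 0 < U i j := lt_of_le_of_ne ((hU i).1 j) (Ne.symm hc.1)
      have hj1 : U i j < 1 := lt_of_le_of_ne (entry_le_one U hU i j) hc.2
      obtain ⟨j', hj'ne, hj'pos⟩ := exists_partner U hU i j hj1
      set t := min (U i j) (U i j') with ht
      have htpos : 0 < t := lt_min hj0 hj'pos
      have hmemP : U + t • Wm i j j' ∈ SigmaSet n K :=
        pert_mem U hU i hj'ne t (by linarith [(hU i).1 j]) (by
          have := min_le_right (U i j) (U i j'); linarith)
      have hmemM : U + (-t) • Wm i j j' ∈ SigmaSet n K :=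
        pert_mem U hU i hj'ne (-t) (by
          have := min_le_left (U i j) (U i j'); linarith) (by linarith [(hU i).1 j'])
      have eP := hmin _ hmemP
      have eM := hmin _ hmemM
      rw [master] at eP eM
      have hQ : Qf Ls ω ε (Wm i j j') < 0 := hQneg i hj'ne
      have ht2 : 0 < t ^ 2 := pow_pos htpos 2
      nlinarith [eP, eM, mul_neg_of_pos_of_neg ht2 hQ]
    refine ⟨hUbar, ?_⟩
    intro V hV
    have h := hmin V hV.1
    rwa [En_eq_Ebar Ls ω Uhat ε U hUbar, En_eq_Ebar Ls ω Uhat ε V hV] at h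
  · rintro ⟨hUbar, hmin⟩
    refine ⟨hUbar.1, ?_⟩
    intro V hV
    obtain ⟨B, hB, hBE⟩ := round (F V).card V hV le_rfl
    calc En Ls ω Uhat ε U = Ebar Ls ω Uhat U := En_eq_Ebar Ls ω Uhat ε U hUbar
      _ ≤ Ebar Ls ω Uhat B := hmin B hB
      _ = En Ls ω Uhat ε B := (En_eq_Ebar Ls ω Uhat ε B hB).symm
      _ ≤ En Ls ω Uhat ε V := hBE

end Main
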